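/- Let M and K be real n×n matrices with M symmetric positive definite and K symmetric positive semidefinite, and let a, b be positive real numbers. Define S = a·M + b²·K·M⁻¹·K and Ŝ = (b·K + √a·M)·M⁻¹·(b·K + √a·M). Then S ⪯ Ŝ ⪯ 2·S in the Loewner order; in particular Ŝ is symmetric positive definite. -/

import Mathlib

open Matrix

lemma psd_smul {n : ℕ} {K : Matrix (Fin n) (Fin n) ℝ} (hK : K.PosSemidef) {c : ℝ}
    (hc : 0 ≤ c) : (c • K).PosSemidef := by
  refine ⟨by rw [Matrix.IsHermitian, Matrix.conjTranspose_smul, hK.1.eq]; simp, fun x => ?_⟩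
  exact (hK.smul hc).2 x

lemma pd_smul {n : ℕ} {M : Matrix (Fin n) (Fin n) ℝ} (hM : M.PosDef) {c : ℝ}
    (hc : 0 < c) : (c • M).PosDef := by
  refine ⟨by rw [Matrix.IsHermitian, Matrix.conjTranspose_smul, hM.1.eq]; simp, fun x hx => ?_⟩
  exact (hM.smul hc).2 hx

/-- With `M` symmetric positive definite, `K` symmetric positive semidefinite and
`a, b > 0`, the exact Schur complement `S = a • M + b² • K M⁻¹ K` and its matching
approximation `Ŝ = (b K + √a M) M⁻¹ (b K + √a M)` satisfy `S ⪯ Ŝ ⪯ 2 S` in the Loewner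
order (i.e. `Ŝ − S` and `2 S − Ŝ` are positive semidefinite); in particular `Ŝ` is
symmetric positive definite. -/
theorem matching_loewner_bounds {n : ℕ} (M K : Matrix (Fin n) (Fin n) ℝ)
    (hM : M.PosDef) (hK : K.PosSemidef) (a b : ℝ) (ha : 0 < a) (hb : 0 < b) :
    (((b • K + Real.sqrt a • M) * M⁻¹ * (b • K + Real.sqrt a • M)
        - (a • M + b ^ 2 • (K * M⁻¹ * K))).PosSemidef) ∧
    (((2 : ℝ) • (a • M + b ^ 2 • (K * M⁻¹ * K))
        - (b • K + Real.sqrt a • M) * M⁻¹ * (b • K + Real.sqrt a • M)).PosSemidef) ∧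
    ((b • K + Real.sqrt a • M) * M⁻¹ * (b • K + Real.sqrt a • M)).PosDef := by
  set s := Real.sqrt a with hs
  have hs0 : 0 < s := Real.sqrt_pos.mpr ha
  have hsa : s * s = a := Real.mul_self_sqrt ha.le
  have hMinv : M⁻¹ * M = 1 := Matrix.nonsing_inv_mul M hM.det_pos.ne'.isUnit
  have hMinv' : M * M⁻¹ = 1 := Matrix.mul_nonsing_inv M hM.det_pos.ne'.isUnit
  have hMiPD : M⁻¹.PosDef := Matrix.posDef_inv_iff.mpr hM
  have hKH : Kᴴ = K := hK.1
  have hMH : Mᴴ = M := hM.1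
  -- expansion of Ŝ
  have hexp : (b • K + s • M) * M⁻¹ * (b • K + s • M)
      = a • M + b ^ 2 • (K * M⁻¹ * K) + (2 * s * b) • K := by
    have h1 : M * M⁻¹ * K = K := by rw [hMinv', Matrix.one_mul]
    have h2 : K * M⁻¹ * M = K := by rw [Matrix.mul_assoc, hMinv, Matrix.mul_one]
    have h3 : M * M⁻¹ * M = M := by rw [hMinv', Matrix.one_mul]
    simp only [Matrix.add_mul, Matrix.mul_add, Matrix.smul_mul, Matrix.mul_smul]
    rw [h1, h2, h3]
    simp only [smul_add, smul_smul]
    rw [hsa]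
    module
  have hdiff1 : (b • K + s • M) * M⁻¹ * (b • K + s • M)
      - (a • M + b ^ 2 • (K * M⁻¹ * K)) = (2 * s * b) • K := by
    rw [hexp]; ring_nf; abel
  have hdiff2 : (2 : ℝ) • (a • M + b ^ 2 • (K * M⁻¹ * K))
      - (b • K + s • M) * M⁻¹ * (b • K + s • M)
      = (b • K - s • M) * M⁻¹ * (b • K - s • M) := by
    have h1 : M * M⁻¹ * K = K := by rw [hMinv', Matrix.one_mul]
    have h2 : K * M⁻¹ * M = K := by rw [Matrix.mul_assoc, hMinv, Matrix.mul_one]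
    have h3 : M * M⁻¹ * M = M := by rw [hMinv', Matrix.one_mul]
    rw [hexp]
    simp only [Matrix.sub_mul, Matrix.mul_sub, Matrix.smul_mul, Matrix.mul_smul]
    rw [h1, h2, h3]
    simp only [smul_sub, smul_smul]
    rw [hsa]
    module
  have hKt : Kᵀ = K := by
    ext i j; have := congrFun (congrFun hKH i) j; simpa using this
  have hMt : Mᵀ = M := by
    ext i j; have := congrFun (congrFun hMH i) j; simpa using this
  have hconjH : (b • K - s • M)ᴴ = b • K - s • M := by
    simp [Matrix.conjTranspose_smul, hKt, hMt]
  have hKMK : (K * M⁻¹ * K).PosSemidef := by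
    have := hMiPD.posSemidef.mul_mul_conjTranspose_same K
    rwa [hKH] at this
  refine ⟨?_, ?_, ?_⟩
  · rw [hdiff1]
    exact psd_smul hK (by positivity)
  · rw [hdiff2]
    have := hMiPD.posSemidef.mul_mul_conjTranspose_same (b • K - s • M)
    rwa [hconjH] at this
  · rw [hexp]
    have hS : (a • M + b ^ 2 • (K * M⁻¹ * K)).PosDef :=
      (pd_smul hM ha).add_posSemidef (psd_smul hKMK (by positivity))
    exact hS.add_posSemidef (psd_smul hK (by positivity))
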